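/- Let F(θ,x) = (R(θ), ψ_θ(x)) be a monotone equiconcave skew product on B × [0,a], with R invertible preserving an ergodic probability measure μ. Let φ_K be the pullback limit function (the pointwise limit of the pullbacks of the constant function a), whose graph is F-invariant. If φ_K > 0 μ-almost everywhere, then the graph of φ_K is an attractor whose basin of attraction contains Z × (0,a] for some Z ⊆ B with μ(Z) = 1: for every θ ∈ Z and every x ∈ (0,a], |π₂(Fⁿ(θ,x)) − φ_K(Rⁿ(θ))| → 0 as n → ∞. -/

import Mathlib

open Set Filter MeasureTheory

lemma aux_concave_step (a β : ℝ) (hβ : 0 < β) (f : ℝ → ℝ)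
    (hmapf : MapsTo f (Icc 0 a) (Icc 0 a)) (hzf : f 0 = 0)
    (hcf : ConcaveOn ℝ (Icc 0 a) (fun x => f x + β * sSup (f '' Icc 0 a) * x ^ 2))
    (u v : ℝ) (hu : 0 < u) (huv : u ≤ v) (hva : v ≤ a) :
    (u / v) * f v + β * f v * (u * (v - u)) ≤ f u := by
  set γ := sSup (f '' Icc 0 a) with hγ
  have hv0 : 0 < v := hu.trans_le huv
  have hvmem : v ∈ Icc 0 a := ⟨hv0.le, hva⟩
  have h0mem : (0:ℝ) ∈ Icc 0 a := ⟨le_rfl, hv0.le.trans hva⟩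
  have ht : 0 ≤ u / v := div_nonneg hu.le hv0.le
  have ht1 : u / v ≤ 1 := (div_le_one hv0).mpr huv
  have hγge : f v ≤ γ := by
    refine le_csSup ⟨a, ?_⟩ (mem_image_of_mem f hvmem)
    rintro y ⟨z, hz, rfl⟩
    exact (hmapf hz).2
  have hfv0 : 0 ≤ f v := (hmapf hvmem).1
  have huvv : u / v * v = u := div_mul_cancel₀ u hv0.ne'
  have hc : u / v * (f v + β * γ * v ^ 2) + (1 - u / v) * (0 + β * γ * 0 ^ 2)
      ≤ f u + β * γ * u ^ 2 := by
    have := hcf.2 hvmem h0mem (show (0:ℝ) ≤ u / v from ht)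
      (show (0:ℝ) ≤ 1 - u / v by linarith) (show u / v + (1 - u / v) = 1 by ring)
    simp only [smul_eq_mul, mul_zero, add_zero, hzf, huvv] at this
    convert this using 2 <;> ring
  have h2 : u / v * (β * γ * v ^ 2) = β * γ * (u * v) := by
    field_simp
  have hc'' : u / v * f v + β * γ * (u * v) ≤ f u + β * γ * u ^ 2 := by
    calc u / v * f v + β * γ * (u * v)
        = u / v * (f v + β * γ * v ^ 2) + (1 - u / v) * (0 + β * γ * 0 ^ 2) := by
          rw [← h2]; ring
      _ ≤ f u + β * γ * u ^ 2 := hc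
  have hw : 0 ≤ u * (v - u) := mul_nonneg hu.le (sub_nonneg.mpr huv)
  have hmul : β * (u * (v - u)) * f v ≤ β * (u * (v - u)) * γ :=
    mul_le_mul_of_nonneg_left hγge (mul_nonneg hβ.le hw)
  nlinarith [hc'', hmul]

theorem pullback_graph_is_attractor {B : Type*} [MeasurableSpace B]
    (a β : ℝ) (ha : 0 < a) (hβ : 0 < β)
    (μ : Measure B) [IsProbabilityMeasure μ]
    (R Rinv : B → B)
    (hleft : Function.LeftInverse Rinv R) (hright : Function.RightInverse Rinv R)
    (herg : Ergodic R μ)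
    (ψ : B → ℝ → ℝ)
    (hmap : ∀ θ, MapsTo (ψ θ) (Icc 0 a) (Icc 0 a))
    (hzero : ∀ θ, ψ θ 0 = 0)
    (hmono : ∀ θ, MonotoneOn (ψ θ) (Icc 0 a))
    (hcont : ∀ θ, ContinuousOn (ψ θ) (Icc 0 a))
    (hconc : ∀ θ, ConcaveOn ℝ (Icc 0 a)
      (fun x => ψ θ x + β * sSup (ψ θ '' Icc 0 a) * x ^ 2))
    (g : ℕ → B → ℝ) (hg0 : ∀ θ, g 0 θ = a)
    (hgs : ∀ (n : ℕ) (θ : B), g (n + 1) θ = ψ (Rinv θ) (g n (Rinv θ)))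
    (φK : B → ℝ)
    (hφK : ∀ θ, Tendsto (fun n => g n θ) atTop (nhds (φK θ)))
    (hinvgraph : ∀ θ, ψ θ (φK θ) = φK (R θ))
    (hpos : ∀ᵐ θ ∂μ, 0 < φK θ) :
    ∃ Z : Set B, μ Z = 1 ∧
      ∀ θ ∈ Z, ∀ x ∈ Ioc (0:ℝ) a,
        Tendsto (fun n : ℕ =>
            |((fun p : B × ℝ => (R p.1, ψ p.1 p.2))^[n] (θ, x)).2 - φK (R^[n] θ)|)
          atTop (nhds 0) := by
  -- φK takes values in [0, a]
  have hg_mem : ∀ (n : ℕ) (θ' : B), g n θ' ∈ Icc 0 a := by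
    intro n
    induction n with
    | zero => intro θ'; rw [hg0]; exact ⟨ha.le, le_rfl⟩
    | succ n ih => intro θ'; rw [hgs]; exact hmap _ (ih _)
  have hφK_mem : ∀ θ', φK θ' ∈ Icc 0 a := fun θ' =>
    isClosed_Icc.mem_of_tendsto (hφK θ') (Filter.Eventually.of_forall fun n => hg_mem n θ')
  -- the full measure set
  have hRmeas : Measurable R := herg.toMeasurePreserving.measurable
  set t := toMeasurable μ {θ | ¬ 0 < φK θ} with ht_def
  have ht0 : μ t = 0 := by
    rw [measure_toMeasurable]
    exact ae_iff.mp hpos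
  have htm : MeasurableSet t := measurableSet_toMeasurable μ _
  refine ⟨{θ | ∀ n : ℕ, R^[n] θ ∉ t}, ?_, ?_⟩
  · have hset : {θ | ∀ n : ℕ, R^[n] θ ∉ t} = ⋂ n : ℕ, R^[n] ⁻¹' tᶜ := by
      ext θ; simp [Set.mem_iInter]
    have hZm : MeasurableSet {θ | ∀ n : ℕ, R^[n] θ ∉ t} := by
      rw [hset]
      exact MeasurableSet.iInter fun n => (hRmeas.iterate n) htm.compl
    have hc : μ ({θ | ∀ n : ℕ, R^[n] θ ∉ t}ᶜ) = 0 := by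
      have hsub : {θ | ∀ n : ℕ, R^[n] θ ∉ t}ᶜ ⊆ ⋃ n : ℕ, R^[n] ⁻¹' t := by
        intro θ hθ
        simp only [Set.mem_compl_iff, Set.mem_setOf_eq, not_forall, not_not] at hθ
        obtain ⟨n, hn⟩ := hθ
        exact Set.mem_iUnion.mpr ⟨n, hn⟩
      have hz : ∀ n : ℕ, μ (R^[n] ⁻¹' t) = 0 := fun n => by
        rw [(herg.toMeasurePreserving.iterate n).measure_preimage htm.nullMeasurableSet]
        exact ht0
      refine le_antisymm (le_trans (measure_mono hsub) ?_) (zero_le)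
      refine le_trans (measure_iUnion_le _) ?_
      simp [hz]
    rw [← prob_compl_eq_zero_iff hZm] at *
    exact hc
  · intro θ hθ x hx
    have hΦpos : ∀ n : ℕ, 0 < φK (R^[n] θ) := by
      intro n
      by_contra h
      exact hθ n (subset_toMeasurable μ _ h)
    set F : B × ℝ → B × ℝ := fun p => (R p.1, ψ p.1 p.2) with hF
    have hfst : ∀ n : ℕ, (F^[n] (θ, x)).1 = R^[n] θ := by
      intro n
      induction n with
      | zero => rfl
      | succ n ih =>
        rw [Function.iterate_succ_apply', Function.iterate_succ_apply', ← ih]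
    set X : ℕ → ℝ := fun n => (F^[n] (θ, x)).2 with hX
    set Φ : ℕ → ℝ := fun n => φK (R^[n] θ) with hΦ
    have hXs : ∀ n, X (n + 1) = ψ (R^[n] θ) (X n) := by
      intro n
      simp only [hX, Function.iterate_succ_apply']
      show ψ (F^[n] (θ, x)).1 (F^[n] (θ, x)).2 = _
      rw [hfst n]
    have hΦs : ∀ n, Φ (n + 1) = ψ (R^[n] θ) (Φ n) := by
      intro n
      simp only [hΦ, Function.iterate_succ_apply']
      exact (hinvgraph _).symm
    have hXmem : ∀ n, X n ∈ Icc 0 a := by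
      intro n
      induction n with
      | zero => exact ⟨hx.1.le, hx.2⟩
      | succ n ih => rw [hXs]; exact hmap _ ih
    have hΦmem : ∀ n, Φ n ∈ Icc 0 a := fun n => hφK_mem _
    set u : ℕ → ℝ := fun n => min (X n) (Φ n) with hu
    set v : ℕ → ℝ := fun n => max (X n) (Φ n) with hv
    have huv : ∀ n, u n ≤ v n := fun n => min_le_max
    have humem : ∀ n, u n ∈ Icc 0 a :=
      fun n => ⟨le_min (hXmem n).1 (hΦmem n).1, le_trans (min_le_left _ _) (hXmem n).2⟩
    have hvmem : ∀ n, v n ∈ Icc 0 a :=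
      fun n => ⟨le_trans (hXmem n).1 (le_max_left _ _), max_le (hXmem n).2 (hΦmem n).2⟩
    have hus : ∀ n, u (n + 1) = ψ (R^[n] θ) (u n) := by
      intro n
      rcases le_total (X n) (Φ n) with h | h
      · have h2 := hmono (R^[n] θ) (hXmem n) (hΦmem n) h
        simp only [hu, hXs, hΦs, min_eq_left h, min_eq_left h2]
      · have h2 := hmono (R^[n] θ) (hΦmem n) (hXmem n) h
        simp only [hu, hXs, hΦs, min_eq_right h, min_eq_right h2]
    have hvs : ∀ n, v (n + 1) = ψ (R^[n] θ) (v n) := by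
      intro n
      rcases le_total (X n) (Φ n) with h | h
      · have h2 := hmono (R^[n] θ) (hXmem n) (hΦmem n) h
        simp only [hv, hXs, hΦs, max_eq_right h, max_eq_right h2]
      · have h2 := hmono (R^[n] θ) (hΦmem n) (hXmem n) h
        simp only [hv, hXs, hΦs, max_eq_left h, max_eq_left h2]
    have hψv_pos : ∀ n, 0 < ψ (R^[n] θ) (v n) := by
      intro n
      have h1 : ψ (R^[n] θ) (Φ n) ≤ ψ (R^[n] θ) (v n) :=
        hmono (R^[n] θ) (hΦmem n) (hvmem n) (le_max_right _ _)
      have h2 : ψ (R^[n] θ) (Φ n) = φK (R^[n + 1] θ) := (hΦs n).symm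
      linarith [h1, h2, hΦpos (n + 1)]
    have hupos : ∀ n, 0 < u n := by
      intro n
      induction n with
      | zero =>
        have : Φ 0 = φK θ := by simp [hΦ]
        exact lt_min hx.1 (by rw [this] at *; have := hΦpos 0; simpa using this)
      | succ n ih =>
        rw [hus]
        have hkey := aux_concave_step a β hβ (ψ (R^[n] θ)) (hmap _) (hzero _) (hconc _)
          (u n) (v n) ih (huv n) (hvmem n).2
        have h1 : 0 < u n / v n * ψ (R^[n] θ) (v n) :=
          mul_pos (div_pos ih (ih.trans_le (huv n))) (hψv_pos n)
        have h2 : 0 ≤ β * ψ (R^[n] θ) (v n) * (u n * (v n - u n)) :=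
          mul_nonneg (mul_nonneg hβ.le (hψv_pos n).le)
            (mul_nonneg ih.le (sub_nonneg.mpr (huv n)))
        linarith
    have hvpos : ∀ n, 0 < v n := fun n => (hupos n).trans_le (huv n)
    set lam : ℕ → ℝ := fun n => u n / v n with hlam
    have hstep : ∀ n, lam n + β * (u n * (v n - u n)) ≤ lam (n + 1) := by
      intro n
      have hkey := aux_concave_step a β hβ (ψ (R^[n] θ)) (hmap _) (hzero _) (hconc _)
        (u n) (v n) (hupos n) (huv n) (hvmem n).2
      have hvp := hψv_pos n
      rw [hlam]
      simp only [hus, hvs]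
      rw [le_div_iff₀ hvp]
      nlinarith [hkey]
    have hlam_mono : Monotone lam := by
      apply monotone_nat_of_le_succ
      intro n
      have h2 : 0 ≤ β * (u n * (v n - u n)) :=
        mul_nonneg hβ.le (mul_nonneg (hupos n).le (sub_nonneg.mpr (huv n)))
      linarith [hstep n]
    have hlam_le_one : ∀ n, lam n ≤ 1 := fun n => (div_le_one (hvpos n)).mpr (huv n)
    have hlam0 : 0 < lam 0 := div_pos (hupos 0) (hvpos 0)
    have hbdd : BddAbove (Set.range lam) := ⟨1, by rintro y ⟨n, rfl⟩; exact hlam_le_one n⟩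
    have hL : Tendsto lam atTop (nhds (⨆ n, lam n)) := tendsto_atTop_ciSup hlam_mono hbdd
    have hΔ : Tendsto (fun n => lam (n + 1) - lam n) atTop (nhds 0) := by
      have h1 : Tendsto (fun n => lam (n + 1)) atTop (nhds (⨆ n, lam n)) :=
        hL.comp (tendsto_add_atTop_nat 1)
      simpa using h1.sub hL
    have hd2 : ∀ n, (v n - u n) ^ 2 ≤ (lam (n + 1) - lam n) / (β * lam 0) := by
      intro n
      rw [le_div_iff₀ (mul_pos hβ hlam0)]
      have h1 := hstep n
      have h2 : lam 0 ≤ lam n := hlam_mono (Nat.zero_le n)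
      have h3 : lam n * v n = u n := div_mul_cancel₀ (u n) (hvpos n).ne'
      have h4 : v n - u n ≤ v n := by linarith [(humem n).1]
      have h5 : 0 ≤ v n - u n := sub_nonneg.mpr (huv n)
      have hA : lam 0 * ((v n - u n) * (v n - u n)) ≤ lam 0 * (v n * (v n - u n)) :=
        mul_le_mul_of_nonneg_left (mul_le_mul_of_nonneg_right h4 h5) hlam0.le
      have hB : lam 0 * (v n * (v n - u n)) ≤ lam n * (v n * (v n - u n)) :=
        mul_le_mul_of_nonneg_right h2 (mul_nonneg (hvpos n).le h5)
      have hA' := mul_le_mul_of_nonneg_left hA hβ.le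
      have hB' := mul_le_mul_of_nonneg_left hB hβ.le
      have h3' : β * (lam n * v n * (v n - u n)) = β * (u n * (v n - u n)) := by rw [h3]
      nlinarith [h1, hA', hB', h3']
    have hd2t : Tendsto (fun n => (v n - u n) ^ 2) atTop (nhds 0) := by
      have hΔ' : Tendsto (fun n => (lam (n + 1) - lam n) / (β * lam 0)) atTop (nhds 0) := by
        simpa using hΔ.div_const (β * lam 0)
      exact tendsto_of_tendsto_of_tendsto_of_le_of_le tendsto_const_nhds hΔ'
        (fun n => sq_nonneg _) hd2
    have hdt : Tendsto (fun n => v n - u n) atTop (nhds 0) := by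
      have hs : Tendsto (fun n => Real.sqrt ((v n - u n) ^ 2)) atTop (nhds 0) := by
        have := (Real.continuous_sqrt.tendsto 0).comp hd2t
        simpa [Function.comp_def] using this
      refine hs.congr fun n => ?_
      exact Real.sqrt_sq (sub_nonneg.mpr (huv n))
    refine hdt.congr fun n => ?_
    exact (max_sub_min_eq_abs (X n) (Φ n)).trans (abs_sub_comm _ _)
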